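/- Let G be a finite group, π a set of primes, N a normal nilpotent Hall π-subgroup of G with abelian complement K. Let x ∈ N be a π-element and k ∈ K. Then the set C = {g ∈ G : the π-part of g is conjugate to x, and g = n·k for some n ∈ N} is contained in a single conjugacy class of G (any two elements of C are conjugate in G). -/

import Mathlib

open Subgroup Finset

/-- If every prime dividing `m` is in `π` and no prime dividing `n` is in `π`,
then `m` and `n` are coprime. -/
lemma coprime_aux (π : Set ℕ) {m n : ℕ} (hm : ∀ p, p.Prime → p ∣ m → p ∈ π)
    (hn : ∀ p, p.Prime → p ∣ n → p ∉ π) (hm0 : m ≠ 0) : Nat.Coprime m n := by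
  by_contra hg
  have hgcd : Nat.gcd m n ≠ 1 := hg
  have hp := Nat.minFac_prime hgcd
  exact hn _ hp ((Nat.minFac_dvd _).trans (Nat.gcd_dvd_right m n))
    (hm _ hp ((Nat.minFac_dvd _).trans (Nat.gcd_dvd_left m n)))

open scoped IsMulCommutative in
/-- Abelian step: conjugating `a` to `a*z` by an element of an abelian normal
subgroup `Z` of coprime order. -/
lemma abelian_conj_step {G : Type*} [Group G] (Z : Subgroup G) [Finite Z]
    [IsMulCommutative Z] [Z.Normal] (a z : G) (hz : z ∈ Z) (d : ℕ)
    (hda : a ^ d = 1) (hdb : (a * z) ^ d = 1)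
    (hcop : Nat.Coprime d (Nat.card Z)) :
    ∃ t ∈ Z, t * a * t⁻¹ = a * z := by
  -- the conjugation-by-`a⁻¹` endomorphism of `Z`
  set φ : Z →* Z :=
    { toFun := fun w => ⟨a⁻¹ * w * a, by
        simpa using Subgroup.Normal.conj_mem ‹Z.Normal› w w.2 a⁻¹⟩
      map_one' := by ext; simp
      map_mul' := fun w₁ w₂ => by ext; simp [mul_assoc] } with hφ
  have hφcoe : ∀ w : Z, (φ w : G) = a⁻¹ * w * a := fun w => rfl
  set z' : Z := ⟨z, hz⟩ with hz'
  -- the "norm" of z is 1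
  have hP : ∀ n : ℕ, (a * z) ^ n = a ^ n * ↑(∏ i ∈ range n, φ^[i] z') := by
    intro n
    induction n with
    | zero => simp
    | succ n ih =>
      rw [pow_succ, ih, Finset.prod_range_succ']
      push_cast [hφcoe]
      have : (↑(∏ i ∈ range n, φ^[i+1] z') : G)
          = a⁻¹ * ↑(∏ i ∈ range n, φ^[i] z') * a := by
        rw [show (∏ i ∈ range n, φ^[i+1] z') = φ (∏ i ∈ range n, φ^[i] z') by
          rw [map_prod]; exact Finset.prod_congr rfl fun i _ => by
            rw [Function.iterate_succ_apply']]
        exact hφcoe _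
      rw [this]
      simp [Function.iterate_zero_apply]
      group
      rfl
  have hNz : (∏ i ∈ range d, φ^[i] z') = 1 := by
    have := hP d
    rw [hdb, hda, one_mul] at this
    exact_mod_cast (OneMemClass.coe_eq_one.mp this.symm)
  -- iterates of φ preserve powers
  have hiterpow : ∀ (i m : ℕ) (w : Z), φ^[i] (w ^ m) = (φ^[i] w) ^ m := by
    intro i
    induction i with
    | zero => simp
    | succ i ih =>
      intro m w
      rw [Function.iterate_succ_apply', ih, map_pow, ← Function.iterate_succ_apply' φ i w]
  set c : ℕ := Nat.card Z with hc
  have hc0 : 0 < c := Nat.card_pos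
  have htot : 1 ≤ c.totient := Nat.totient_pos.mpr hc0
  set e : ℕ := d ^ (c.totient - 1) with he
  have hde : z' ^ (d * e) = z' := by
    have h1 : d * e = d ^ c.totient := by
      rw [he, ← pow_succ']
      congr 1
      omega
    rw [h1]
    conv_rhs => rw [← pow_one z']
    rw [pow_eq_pow_iff_modEq]
    exact (Nat.ModEq.pow_totient hcop).of_dvd (orderOf_dvd_natCard z')
  set m : ℕ := (c - 1) * e with hm
  set z₀ : Z := z' ^ m with hz₀
  have hz₀d : z₀ ^ d = z'⁻¹ := by
    have h2 : z₀ ^ d = (z' ^ (d * e)) ^ (c - 1) := by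
      rw [hz₀, ← pow_mul, ← pow_mul]
      rw [hm]
      ring_nf
    rw [h2, hde]
    have h3 : z' ^ (c - 1) * z' = 1 := by
      rw [← pow_succ]
      have : c - 1 + 1 = c := by omega
      rw [this, hc]
      exact pow_card_eq_one'
    exact eq_inv_of_mul_eq_one_left h3
  have hNz₀ : (∏ i ∈ range d, φ^[i] z₀) = 1 := by
    have : (∏ i ∈ range d, φ^[i] z₀) = (∏ i ∈ range d, φ^[i] z') ^ m := by
      rw [← Finset.prod_pow]
      exact Finset.prod_congr rfl fun i _ => hiterpow i m z'
    rw [this, hNz, one_pow]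
  -- partial products
  set s : ℕ → Z := fun j => ∏ i ∈ range j, φ^[i] z₀ with hs
  have hφs : ∀ j, φ (s j) = z₀⁻¹ * s (j + 1) := by
    intro j
    have h4 : φ (s j) = ∏ i ∈ range j, φ^[i+1] z₀ := by
      rw [hs, map_prod]
      exact Finset.prod_congr rfl fun i _ => (Function.iterate_succ_apply' φ i z₀).symm
    have h5 : s (j + 1) = (∏ i ∈ range j, φ^[i+1] z₀) * φ^[0] z₀ :=
      Finset.prod_range_succ' _ j
    rw [h4, h5, Function.iterate_zero_apply, mul_comm _ z₀, ← mul_assoc,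
      inv_mul_cancel, one_mul]
  set t : Z := ∏ j ∈ range d, s j with ht
  have hφt : φ t = z' * t := by
    rw [ht, map_prod]
    calc (∏ j ∈ range d, φ (s j)) = ∏ j ∈ range d, (z₀⁻¹ * s (j+1)) :=
          Finset.prod_congr rfl fun j _ => hφs j
      _ = (z₀⁻¹) ^ d * ∏ j ∈ range d, s (j+1) := by
          rw [Finset.prod_mul_distrib, Finset.prod_const, card_range]
      _ = (z₀ ^ d)⁻¹ * ((∏ j ∈ range d, s j) * s d) := by
          rw [inv_pow]
          congr 1
          rw [← Finset.prod_range_succ]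
          rw [Finset.prod_range_succ']
          simp [hs]
      _ = z' * t := by
          rw [hz₀d, inv_inv, ht]
          have h5 : s d = 1 := hNz₀
          rw [h5, mul_one]
  refine ⟨(t : G), t.2, ?_⟩
  have h6 : (φ t : G) = a⁻¹ * t * a := hφcoe t
  rw [hφt] at h6
  push_cast at h6
  -- h6 : z * t = a⁻¹ * t * a
  have h7 : (t : G) * a = a * (z * (t : G)) := by
    rw [h6]
    group
  rw [h7]
  group

/-- A nontrivial nilpotent group has nontrivial center. -/
lemma center_nontrivial_of_nilpotent {H : Type*} [Group H] [Nontrivial H]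
    [hn : Group.IsNilpotent H] : Nontrivial (Subgroup.center H) := by
  rw [Subgroup.nontrivial_iff_ne_bot]
  intro hbot
  have hucs : ∀ n, Subgroup.upperCentralSeries H n = ⊥ := by
    intro n
    induction n with
    | zero => rfl
    | succ n ih =>
      ext x
      rw [Subgroup.mem_upperCentralSeries_succ_iff]
      simp only [ih, Subgroup.mem_bot]
      constructor
      · intro hcomm
        have : x ∈ Subgroup.center H := by
          rw [Subgroup.mem_center_iff]
          intro y
          have h2 : x * y * x⁻¹ * y⁻¹ = 1 := hcomm y
          calc y * x = (x * y * x⁻¹ * y⁻¹) * (y * x) := by rw [h2, one_mul]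
            _ = x * y := by group
        rw [hbot] at this
        exact this
      · rintro rfl
        intro y
        group
  obtain ⟨m, hm⟩ := hn.nilpotent
  have : (⊤ : Subgroup H) = ⊥ := by rw [← hm, hucs]
  obtain ⟨x, y, hxy⟩ := exists_pair_ne H
  apply hxy
  have hx : x ∈ (⊥ : Subgroup H) := this ▸ Subgroup.mem_top x
  have hy : y ∈ (⊥ : Subgroup H) := this ▸ Subgroup.mem_top y
  rw [Subgroup.mem_bot] at hx hy
  rw [hx, hy]

/-- Two elements of a finite group whose orders are coprime to the order of a
normal nilpotent subgroup `M` and which lie in the same coset of `M` are conjugate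
by an element of `M`. -/
lemma key_conj_lemma.{u} (n : ℕ) : ∀ (L : Type u) [Group L] [Finite L] (M : Subgroup L),
    Nat.card M ≤ n → M.Normal → Group.IsNilpotent M →
    ∀ a b : L, Nat.Coprime (orderOf a) (Nat.card M) →
      Nat.Coprime (orderOf b) (Nat.card M) →
      b⁻¹ * a ∈ M → ∃ t ∈ M, t * a * t⁻¹ = b := by
  induction n using Nat.strong_induction_on with
  | _ n ih =>
    intro L _ _ M hcard hMnorm hMnilp a b hca hcb hmem
    by_cases hbot : M = ⊥
    · subst hbot
      rw [Subgroup.mem_bot, inv_mul_eq_one] at hmem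
      exact ⟨1, Subgroup.one_mem _, by rw [hmem]; group⟩
    · haveI := hMnorm
      haveI := hMnilp
      haveI : Nontrivial M := (Subgroup.nontrivial_iff_ne_bot M).mpr hbot
      haveI : Nontrivial (Subgroup.center M) := center_nontrivial_of_nilpotent
      set Z' : Subgroup L := (Subgroup.center M).map M.subtype with hZ'
      haveI hZ'norm : Z'.Normal := inferInstance
      have hZ'le : Z' ≤ M := Subgroup.map_subtype_le _
      haveI hZ'comm : IsMulCommutative Z' := by
        constructor
        constructor
        rintro ⟨y, hy⟩ ⟨w, hw⟩
        obtain ⟨y₀, hy₀, rfl⟩ := hy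
        obtain ⟨w₀, hw₀, rfl⟩ := hw
        have h := congrArg Subtype.val ((Subgroup.mem_center_iff.mp hw₀) y₀)
        ext
        simpa using h
      -- the quotient setup
      set q : L →* L ⧸ Z' := QuotientGroup.mk' Z' with hq
      set ρ : M →* L ⧸ Z' := q.comp M.subtype with hρ
      have hρrange : ρ.range = M.map q := by
        rw [hρ, MonoidHom.range_comp, Subgroup.range_subtype]
      -- ker ρ is nontrivial
      obtain ⟨z, hzne⟩ := exists_ne (1 : Subgroup.center M)
      have hzker : ((z.1 : M) : L) ∈ Z' := ⟨z.1, z.2, rfl⟩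
      have hkermem : (z.1 : M) ∈ ρ.ker := by
        rw [MonoidHom.mem_ker, hρ, MonoidHom.comp_apply]
        exact (QuotientGroup.eq_one_iff _).mpr hzker
      haveI : Nontrivial ρ.ker := by
        refine ⟨⟨⟨z.1, hkermem⟩, 1, fun h => hzne ?_⟩⟩
        have := congrArg Subtype.val h
        simp only [Subgroup.coe_one] at this
        ext
        exact congrArg Subtype.val this
      -- cards
      have hcardeq : Nat.card M = Nat.card (M ⧸ ρ.ker) * Nat.card ρ.ker :=
        Subgroup.card_eq_card_quotient_mul_card_subgroup ρ.ker
      have hcardrange : Nat.card (M ⧸ ρ.ker) = Nat.card ρ.range :=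
        Nat.card_congr (QuotientGroup.quotientKerEquivRange ρ).toEquiv
      have hker2 : 2 ≤ Nat.card ρ.ker := Finite.one_lt_card
      have hrangelt : Nat.card ρ.range < Nat.card M := by
        calc Nat.card ρ.range < Nat.card ρ.range * 2 := by
              have : 0 < Nat.card ρ.range := Nat.card_pos
              omega
          _ ≤ Nat.card ρ.range * Nat.card ρ.ker := Nat.mul_le_mul_left _ hker2
          _ = Nat.card M := by rw [hcardeq, hcardrange, Nat.mul_comm]
      set M' : Subgroup (L ⧸ Z') := M.map q with hM'
      have hcardM' : Nat.card M' = Nat.card ρ.range := by rw [hρrange]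
      have hM'lt : Nat.card M' < Nat.card M := hcardM' ▸ hrangelt
      have hM'dvd : Nat.card M' ∣ Nat.card M :=
        ⟨Nat.card ρ.ker, by rw [hcardM', hcardeq, hcardrange]⟩
      haveI hM'norm : M'.Normal := hMnorm.map q (QuotientGroup.mk'_surjective Z')
      have hM'nilp : Group.IsNilpotent M' := by
        have h1 : Group.IsNilpotent ρ.range :=
          nilpotent_of_surjective ρ.rangeRestrict ρ.rangeRestrict_surjective
        rwa [hρrange] at h1
      -- apply inductive hypothesis in the quotient
      obtain ⟨tq, htqmem, htq⟩ := ih (Nat.card M') (hM'lt.trans_le hcard) (L ⧸ Z') M'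
        le_rfl hM'norm hM'nilp (q a) (q b)
        (Nat.Coprime.coprime_dvd_left (orderOf_map_dvd q a)
          (hca.coprime_dvd_right hM'dvd))
        (Nat.Coprime.coprime_dvd_left (orderOf_map_dvd q b)
          (hcb.coprime_dvd_right hM'dvd))
        (by rw [← map_inv, ← map_mul]; exact Subgroup.mem_map_of_mem q hmem)
      obtain ⟨t₀, ht₀M, ht₀⟩ := Subgroup.mem_map.mp htqmem
      set a' : L := t₀ * a * t₀⁻¹ with ha'
      set zz : L := a'⁻¹ * b with hzz
      have hb : a' * zz = b := by rw [hzz]; group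
      have hzzZ : zz ∈ Z' := by
        have h2 : q zz = 1 := by
          rw [hzz, ha']
          simp only [map_mul, map_inv, ht₀, htq]
          group
        exact (QuotientGroup.eq_one_iff _).mp h2
      set d : ℕ := orderOf a * orderOf b with hd
      have hda' : a' ^ d = 1 := by
        rw [ha', conj_pow, hd, pow_mul, pow_orderOf_eq_one, one_pow, mul_one,
          mul_inv_cancel]
      have hdb' : (a' * zz) ^ d = 1 := by
        rw [hb, hd, mul_comm (orderOf a), pow_mul, pow_orderOf_eq_one, one_pow]
      have hcop : Nat.Coprime d (Nat.card Z') :=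
        (hca.mul hcb).coprime_dvd_right (Subgroup.card_dvd_of_le hZ'le)
      obtain ⟨t₁, ht₁Z, ht₁⟩ := abelian_conj_step Z' a' zz hzzZ d hda' hdb' hcop
      refine ⟨t₁ * t₀, Subgroup.mul_mem _ (hZ'le ht₁Z) ht₀M, ?_⟩
      rw [hb] at ht₁
      calc (t₁ * t₀) * a * (t₁ * t₀)⁻¹ = t₁ * (t₀ * a * t₀⁻¹) * t₁⁻¹ := by group
        _ = b := by rw [← ha', ht₁]

/-- A `π`-element lies in the normal Hall `π`-subgroup. -/
lemma pi_elt_mem {G : Type*} [Group G] [Finite G] (π : Set ℕ) (N : Subgroup G)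
    [N.Normal] (hHallπ' : ∀ p : ℕ, p.Prime → p ∣ N.index → p ∉ π)
    (h : G) (hh : ∀ p : ℕ, p.Prime → p ∣ orderOf h → p ∈ π) : h ∈ N := by
  set o := orderOf ((QuotientGroup.mk' N) h) with ho
  have h1 : o ∣ orderOf h := orderOf_map_dvd _ _
  have h2 : o ∣ N.index := by
    rw [Subgroup.index]
    exact orderOf_dvd_natCard _
  have ho1 : o = 1 := by
    by_contra h3
    exact hHallπ' _ (Nat.minFac_prime h3) ((Nat.minFac_dvd o).trans h2)
      (hh _ (Nat.minFac_prime h3) ((Nat.minFac_dvd o).trans h1))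
  exact (QuotientGroup.eq_one_iff h).mp (orderOf_eq_one_iff.mp ho1)

/-- `h` is the `π`-part of `g`: `h` lies in the cyclic group generated by `g`,
its order is a `π`-number, and `g = h * h'` for some `h'` in `⟨g⟩` whose order
is a `π'`-number. -/
def IsPiPart {G : Type*} [Group G] (π : Set ℕ) (g h : G) : Prop :=
  h ∈ Subgroup.zpowers g ∧ (∀ p : ℕ, p.Prime → p ∣ orderOf h → p ∈ π) ∧
    ∃ h' ∈ Subgroup.zpowers g, g = h * h' ∧
      ∀ p : ℕ, p.Prime → p ∣ orderOf h' → p ∉ π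

/-- Lemma 3.1: if `N` is a normal nilpotent Hall `π`-subgroup of the finite group `G`
with abelian complement `K`, `x ∈ N` is a `π`-element and `k ∈ K`, then any two
elements of `G` whose `π`-part is conjugate to `x` and which lie in the coset `N·k`
are conjugate in `G`. -/
theorem conj_class_of_pi_part {G : Type*} [Group G] [Fintype G] (π : Set ℕ)
    (N K : Subgroup G) (hNnormal : N.Normal) (hNnilp : Group.IsNilpotent N)
    (hHallπ : ∀ p : ℕ, p.Prime → p ∣ Nat.card N → p ∈ π)
    (hHallπ' : ∀ p : ℕ, p.Prime → p ∣ N.index → p ∉ π)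
    (hcompl : N.IsComplement' K) (hKab : ∀ a b : K, a * b = b * a)
    (x : G) (hx : x ∈ N) (hxπ : ∀ p : ℕ, p.Prime → p ∣ orderOf x → p ∈ π)
    (k : G) (hk : k ∈ K)
    (g₁ g₂ : G)
    (h₁ : (∃ h : G, IsPiPart π g₁ h ∧ IsConj h x) ∧ ∃ n ∈ N, g₁ = n * k)
    (h₂ : (∃ h : G, IsPiPart π g₂ h ∧ IsConj h x) ∧ ∃ n ∈ N, g₂ = n * k) :
    IsConj g₁ g₂ := by
  haveI := hNnormal
  -- conjugation preserves the coset N*k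
  have hcoset : ∀ c g : G, (∃ n ∈ N, g = n * k) → ∃ n' ∈ N, c * g * c⁻¹ = n' * k := by
    rintro c g ⟨n, hn, rfl⟩
    obtain ⟨⟨⟨m, hm⟩, ⟨u, hu⟩⟩, hmu, -⟩ := hcompl.existsUnique c
    have h := congrArg Subtype.val (hKab ⟨u, hu⟩ ⟨k, hk⟩)
    push_cast at h
    -- h : u * k = k * u
    have hku' : k * u⁻¹ = u⁻¹ * k := by
      calc k * u⁻¹ = u⁻¹ * (u * k) * u⁻¹ := by group
        _ = u⁻¹ * (k * u) * u⁻¹ := by rw [h]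
        _ = u⁻¹ * k := by group
    refine ⟨m * (u * n * u⁻¹) * (k * m⁻¹ * k⁻¹), ?_, ?_⟩
    · exact mul_mem (mul_mem hm (hNnormal.conj_mem n hn u))
        (hNnormal.conj_mem m⁻¹ (inv_mem hm) k)
    · rw [← hmu]
      calc (m : G) * u * (n * k) * ((m : G) * u)⁻¹
            = m * (u * n) * (k * u⁻¹) * m⁻¹ := by group
        _ = m * (u * n) * (u⁻¹ * k) * m⁻¹ := by rw [hku']
        _ = m * (u * n * u⁻¹) * (k * m⁻¹ * k⁻¹) * k := by group
  -- reduction step : each gᵢ is conjugate to x * v with v a π'-element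
  -- centralizing x, and x * v in the coset N * k
  have step : ∀ g : G, (∃ h : G, IsPiPart π g h ∧ IsConj h x) → (∃ n ∈ N, g = n * k) →
      ∃ v : G, IsConj g (x * v) ∧ v ∈ Subgroup.centralizer {x} ∧
        (∀ p : ℕ, p.Prime → p ∣ orderOf v → p ∉ π) ∧ ∃ n ∈ N, x * v = n * k := by
    rintro g ⟨h, ⟨hhz, hhπ, h', hh'z, hgh, hh'π⟩, hconj⟩ hgcoset
    obtain ⟨c, hc⟩ := isConj_iff.mp hconj
    -- h and h' commute
    obtain ⟨i, hi⟩ := Subgroup.mem_zpowers_iff.mp hhz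
    obtain ⟨j, hj⟩ := Subgroup.mem_zpowers_iff.mp hh'z
    have hcomm : h * h' = h' * h := by
      rw [← hi, ← hj]
      exact (Commute.zpow_zpow_self g i j).eq
    set v : G := c * h' * c⁻¹ with hv
    have hgx : c * g * c⁻¹ = x * v := by
      rw [hgh, ← hc, hv]
      group
    refine ⟨v, isConj_iff.mpr ⟨c, hgx⟩, ?_, ?_, ?_⟩
    · rw [Subgroup.mem_centralizer_iff]
      intro y hy
      rw [Set.mem_singleton_iff] at hy
      rw [hy]
      have e1 : x * v = c * (h * h') * c⁻¹ := by rw [← hc, hv]; group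
      have e2 : v * x = c * (h' * h) * c⁻¹ := by rw [← hc, hv]; group
      rw [e1, e2, hcomm]
    · intro p hp hpdvd
      refine hh'π p hp ?_
      have hord : orderOf (c * h' * c⁻¹) = orderOf h' := by
        have h9 := orderOf_injective (MulAut.conj c).toMonoidHom
          (MulAut.conj c).injective h'
        simpa [MulAut.conj_apply] using h9
      rw [hv, hord] at hpdvd
      exact hpdvd
    · obtain ⟨n', hn', he⟩ := hcoset c g hgcoset
      exact ⟨n', hn', by rw [← hgx, he]⟩
  obtain ⟨v₁, hconj₁, hv₁C, hv₁π, n₁, hn₁, he₁⟩ := step g₁ h₁.1 h₁.2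
  obtain ⟨v₂, hconj₂, hv₂C, hv₂π, n₂, hn₂, he₂⟩ := step g₂ h₂.1 h₂.2
  -- v₂⁻¹ * v₁ ∈ N
  have hv₁e : v₁ = x⁻¹ * (n₁ * k) := by rw [← he₁]; group
  have hv₂e : v₂ = x⁻¹ * (n₂ * k) := by rw [← he₂]; group
  have hvN : v₂⁻¹ * v₁ ∈ N := by
    have : v₂⁻¹ * v₁ = k⁻¹ * (n₂⁻¹ * n₁) * (k⁻¹)⁻¹ := by
      rw [hv₁e, hv₂e]
      group
    rw [this]
    exact hNnormal.conj_mem _ (mul_mem (inv_mem hn₂) hn₁) k⁻¹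
  -- apply the key lemma in the centralizer of x
  set C : Subgroup G := Subgroup.centralizer {x} with hC
  set MM : Subgroup C := (N ⊓ C).subgroupOf C with hMM
  have hMMle : N ⊓ C ≤ C := inf_le_right
  haveI hMMnorm : MM.Normal := by
    have : MM = N.subgroupOf C := by
      ext y
      simp [hMM, Subgroup.mem_subgroupOf, y.2]
    rw [this]
    exact hNnormal.subgroupOf C
  have hMMnilp : Group.IsNilpotent MM := by
    haveI := hNnilp
    have e₂ : ((N ⊓ C).subgroupOf N) ≃* ↥(N ⊓ C) := Subgroup.subgroupOfEquivOfLe inf_le_left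
    have e₃ : ((N ⊓ C).subgroupOf C) ≃* ↥(N ⊓ C) := Subgroup.subgroupOfEquivOfLe inf_le_right
    have h1 : Group.IsNilpotent ((N ⊓ C).subgroupOf N) := Subgroup.isNilpotent _
    have h2 : Group.IsNilpotent ↥(N ⊓ C) := nilpotent_of_mulEquiv e₂
    exact nilpotent_of_mulEquiv e₃.symm
  have hMMcard : Nat.card MM ∣ Nat.card N := by
    have h1 : Nat.card MM = Nat.card ↥(N ⊓ C) :=
      Nat.card_congr (Subgroup.subgroupOfEquivOfLe inf_le_right).toEquiv
    rw [h1]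
    exact Subgroup.card_dvd_of_le inf_le_left
  have hMMπ : ∀ p : ℕ, p.Prime → p ∣ Nat.card MM → p ∈ π := fun p hp hdvd =>
    hHallπ p hp (hdvd.trans hMMcard)
  set a : C := ⟨v₁, hv₁C⟩ with ha
  set b : C := ⟨v₂, hv₂C⟩ with hb
  have horda : orderOf a = orderOf v₁ := (Subgroup.orderOf_coe a).symm
  have hordb : orderOf b = orderOf v₂ := (Subgroup.orderOf_coe b).symm
  have hcopa : Nat.Coprime (orderOf a) (Nat.card MM) := by
    rw [horda]
    exact (coprime_aux π hMMπ hv₁π Nat.card_pos.ne').symm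
  have hcopb : Nat.Coprime (orderOf b) (Nat.card MM) := by
    rw [hordb]
    exact (coprime_aux π hMMπ hv₂π Nat.card_pos.ne').symm
  have hmemMM : b⁻¹ * a ∈ MM := by
    rw [hMM, Subgroup.mem_subgroupOf]
    exact ⟨hvN, Subgroup.mul_mem _ (inv_mem hv₂C) hv₁C⟩
  obtain ⟨t, htMM, hteq⟩ := key_conj_lemma (Nat.card MM) C MM le_rfl hMMnorm hMMnilp
    a b hcopa hcopb hmemMM
  have hteqG : (t : G) * v₁ * (t : G)⁻¹ = v₂ := by
    have := congrArg Subtype.val hteq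
    push_cast at this
    exact this
  have htx : x * (t : G) = (t : G) * x := t.2 x rfl
  have hconjmid : IsConj (x * v₁) (x * v₂) := by
    refine isConj_iff.mpr ⟨(t : G), ?_⟩
    calc (t : G) * (x * v₁) * (t : G)⁻¹
        = ((t : G) * x * (t : G)⁻¹) * ((t : G) * v₁ * (t : G)⁻¹) := by group
      _ = x * ((t : G) * v₁ * (t : G)⁻¹) := by
          congr 1
          rw [← htx]
          group
      _ = x * v₂ := by rw [hteqG]
  exact (hconj₁.trans hconjmid).trans hconj₂.symm
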